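/- Every firmly nonexpansive mapping T : H → H on a real Hilbert space is strongly nonexpansive: if (x_n), (y_n) are sequences with (x_n - y_n) bounded and |x_n - y_n| - |Tx_n - Ty_n| → 0, then (x_n - y_n) - (Tx_n - Ty_n) → 0 in norm. -/

import Mathlib

open Filter Topology

/-- `P` is the nearest point projection of a real Hilbert space onto `C`. -/
def IsNearestPointProj {H : Type*} [NormedAddCommGroup H] [InnerProductSpace ℝ H]
    (C : Set H) (P : H → H) : Prop :=
  ∀ x, P x ∈ C ∧ ∀ y ∈ C, ‖x - P x‖ ≤ ‖x - y‖

/-- The distance between two sets. -/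
noncomputable def setDist {H : Type*} [NormedAddCommGroup H] (C₁ C₂ : Set H) : ℝ :=
  sInf {d : ℝ | ∃ a ∈ C₁, ∃ b ∈ C₂, d = ‖a - b‖}

theorem stmt3 {H : Type*} [NormedAddCommGroup H] [InnerProductSpace ℝ H] [CompleteSpace H]
    (T : H → H) (hT : ∀ x y : H, ‖T x - T y‖ ^ 2 ≤ inner ℝ (x - y) (T x - T y : H)) :
    (∀ x y : H, ‖T x - T y‖ ≤ ‖x - y‖) ∧
      ∀ x y : ℕ → H, (∃ M : ℝ, ∀ n, ‖x n - y n‖ ≤ M) →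
        Tendsto (fun n => ‖x n - y n‖ - ‖T (x n) - T (y n)‖) atTop (𝓝 0) →
        Tendsto (fun n => (x n - y n) - (T (x n) - T (y n))) atTop (𝓝 0) := by
  have hne : ∀ x y : H, ‖T x - T y‖ ≤ ‖x - y‖ := by
    intro x y
    have h := hT x y
    have h2 : (inner ℝ (x - y) (T x - T y : H) : ℝ) ≤ ‖x - y‖ * ‖T x - T y‖ :=
      real_inner_le_norm _ _
    nlinarith [norm_nonneg (T x - T y), norm_nonneg (x - y)]
  refine ⟨hne, ?_⟩
  rintro x y ⟨M, hM⟩ hlim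
  -- key inequality: ‖(x-y)-(Tx-Ty)‖² ≤ 2M(‖x-y‖ - ‖Tx-Ty‖)
  have key : ∀ n, ‖(x n - y n) - (T (x n) - T (y n))‖ ^ 2 ≤
      2 * M * (‖x n - y n‖ - ‖T (x n) - T (y n)‖) := by
    intro n
    have hexp := @norm_sub_sq_real H _ _ (x n - y n) (T (x n) - T (y n))
    have h1 := hT (x n) (y n)
    have h2 := hne (x n) (y n)
    have h3 := hM n
    have h4 := norm_nonneg (T (x n) - T (y n))
    nlinarith
  have hsq : Tendsto (fun n => ‖(x n - y n) - (T (x n) - T (y n))‖ ^ 2) atTop (𝓝 0) := by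
    have hg : Tendsto (fun n => 2 * M * (‖x n - y n‖ - ‖T (x n) - T (y n)‖)) atTop (𝓝 0) := by
      have := hlim.const_mul (2 * M)
      simpa using this
    exact squeeze_zero (fun n => sq_nonneg _) key hg
  have hnorm : Tendsto (fun n => ‖(x n - y n) - (T (x n) - T (y n))‖) atTop (𝓝 0) := by
    have := hsq.sqrt
    have heq : ∀ n : ℕ, Real.sqrt (‖(x n - y n) - (T (x n) - T (y n))‖ ^ 2) =
        ‖(x n - y n) - (T (x n) - T (y n))‖ := fun n => Real.sqrt_sq (norm_nonneg _)
    simpa [heq] using this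
  exact tendsto_zero_iff_norm_tendsto_zero.mpr hnorm
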